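/- For J > 0 and β > β_c = ln(2)/(2J), the fixed point P = 1 of the map f(P) = [sinh(βJ) + P² cosh(βJ)]/[cosh(βJ) + P² sinh(βJ)] is stable, i.e., |f'(1)| < 1; for 0 < β < β_c it is unstable, i.e., f'(1) > 1. -/

import Mathlib

/-- stability of the fixed point P = 1 of the uniform parity map:
f'(1) = 2e^{-2βJ}, which is < 1 in absolute value for β > β_c and > 1 for β < β_c. -/
theorem fixed_point_one_stability (β J : ℝ) (hJ : 0 < J) (hβ : 0 < β) :
    HasDerivAt (fun P : ℝ => (Real.sinh (β*J) + P^2 * Real.cosh (β*J)) /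
        (Real.cosh (β*J) + P^2 * Real.sinh (β*J)))
      (2 * Real.exp (-2*β*J)) 1 ∧
    (Real.log 2 / (2*J) < β → |2 * Real.exp (-2*β*J)| < 1) ∧
    (β < Real.log 2 / (2*J) → 1 < 2 * Real.exp (-2*β*J)) := by
  have hv : Real.cosh (β*J) + (1:ℝ)^2 * Real.sinh (β*J) ≠ 0 := by
    rw [one_pow, one_mul, Real.cosh_add_sinh]
    exact (Real.exp_pos _).ne'
  refine ⟨?_, ?_, ?_⟩
  · have hu : HasDerivAt (fun P : ℝ => Real.sinh (β*J) + P^2 * Real.cosh (β*J))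
        (2 * Real.cosh (β*J)) 1 := by
      have := ((hasDerivAt_pow 2 (1:ℝ)).mul_const (Real.cosh (β*J))).const_add (Real.sinh (β*J))
      simpa using this
    have hw : HasDerivAt (fun P : ℝ => Real.cosh (β*J) + P^2 * Real.sinh (β*J))
        (2 * Real.sinh (β*J)) 1 := by
      have := ((hasDerivAt_pow 2 (1:ℝ)).mul_const (Real.sinh (β*J))).const_add (Real.cosh (β*J))
      simpa using this
    have h := hu.div hw hv
    convert h using 1
    · rfl
    · rfl
    · rfl
    rw [one_pow, one_mul, one_mul, Real.cosh_add_sinh]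
    have he : Real.exp (β*J) ≠ 0 := (Real.exp_pos _).ne'
    rw [show (-2*β*J) = -(β*J) + -(β*J) by ring, Real.exp_add, Real.exp_neg]
    field_simp
    rw [Real.cosh_eq, Real.sinh_eq]
    field_simp
    rw [Real.exp_neg]
    field_simp
    ring
  · intro h
    rw [abs_of_pos (by positivity)]
    have h2 : Real.log 2 < 2*β*J := by
      have := (div_lt_iff₀ (by positivity)).mp h
      nlinarith
    have : Real.exp (-2*β*J) < Real.exp (-(Real.log 2)) := by
      apply Real.exp_lt_exp.mpr; linarith
    rw [Real.exp_neg, Real.exp_log (by norm_num)] at this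
    linarith
  · intro h
    have h2 : 2*β*J < Real.log 2 := by
      have := (lt_div_iff₀ (by positivity)).mp h
      nlinarith
    have : Real.exp (-(Real.log 2)) < Real.exp (-2*β*J) := by
      apply Real.exp_lt_exp.mpr; linarith
    rw [Real.exp_neg, Real.exp_log (by norm_num)] at this
    nlinarith [Real.exp_pos (-2*β*J)]
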